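/- Let (Ω, 𝓕, P) be a probability space, C ⊆ L^∞ a convex cone with −L^∞₊ ⊆ C, and Φ : (0,∞) → ℝ convex satisfying the growth condition G(Φ) with Φ(0) < +∞. If M_Φ is nonempty, then {z ∈ Lin(M_Φ) : E_P[z·g] ≤ 0 for all g ∈ C} = co(M_Φ); that is, the polar of C inside the linear span of the densities of M_Φ is exactly the convex cone generated by M_Φ. -/

import Mathlib

open MeasureTheory Filter

variable {Ω : Type*} [MeasurableSpace Ω]

/-- The set `M₁` of separating measures for the convex cone `C ⊆ L^∞` of bounded
super-replicable claims: probability measures `Q ≪ P` with `E_Q[g] ≤ 0` for all `g ∈ C`. -/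
def sepMeasures (P : Measure Ω) (C : Set (Ω → ℝ)) : Set (Measure Ω) :=
  {Q | IsProbabilityMeasure Q ∧ Q ≪ P ∧ ∀ g ∈ C, ∫ ω, g ω ∂Q ≤ 0}

/-- The set `M_Φ` of separating measures with finite generalized entropy
`E_P[Φ(dQ/dP)] < ∞` (here `Φ(0) < +∞`, `Φ 0` being the limit of `Φ` at `0⁺`, so that
finiteness of the generalized entropy is plain integrability of `Φ(dQ/dP)`). -/
def MPhi (P : Measure Ω) (C : Set (Ω → ℝ)) (Φ : ℝ → ℝ) : Set (Measure Ω) :=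
  {Q ∈ sepMeasures P C | Integrable (fun ω => Φ ((Q.rnDeriv P ω).toReal)) P}

/-- The density `dQ/dP` as an element of `L⁰(P)` (an a.e.-equivalence class). -/
noncomputable def densAE (P Q : Measure Ω) : Ω →ₘ[P] ℝ :=
  MeasureTheory.AEEqFun.mk (fun ω => (Q.rnDeriv P ω).toReal)
    ((Measure.measurable_rnDeriv Q P).ennreal_toReal).aestronglyMeasurable

/-- A convex function on `(0,∞)` with a (finite) limit at `0⁺` extends convexly to `[0,∞)`. -/
lemma convexOn_Ici_of_Ioi {Φ : ℝ → ℝ} (hc : ConvexOn ℝ (Set.Ioi 0) Φ)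
    (h0 : Tendsto Φ (nhdsWithin 0 (Set.Ioi 0)) (nhds (Φ 0))) :
    ConvexOn ℝ (Set.Ici 0) Φ := by
  have hcont : ContinuousOn Φ (Set.Ioi 0) := hc.continuousOn isOpen_Ioi
  have key : ∀ y : ℝ, 0 < y → ∀ a b : ℝ, 0 ≤ a → 0 ≤ b → a + b = 1 →
      Φ (b * y) ≤ a * Φ 0 + b * Φ y := by
    intro y hy a b ha hb hab
    rcases eq_or_lt_of_le ha with ha0 | ha0
    · have hb1 : b = 1 := by linarith
      simp [← ha0, hb1]
    rcases eq_or_lt_of_le hb with hb0 | hb0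
    · have ha1 : a = 1 := by linarith
      simp [← hb0, ha1]
    have hineq : ∀ ε : ℝ, 0 < ε → Φ (a * ε + b * y) ≤ a * Φ ε + b * Φ y := by
      intro ε hε
      have := hc.2 (Set.mem_Ioi.2 hε) (Set.mem_Ioi.2 hy) ha hb hab
      simpa [smul_eq_mul] using this
    have h1 : Tendsto (fun ε : ℝ => a * Φ ε + b * Φ y) (nhdsWithin 0 (Set.Ioi 0))
        (nhds (a * Φ 0 + b * Φ y)) := by
      exact Tendsto.add_const _ (h0.const_mul a)
    have h2 : Tendsto (fun ε : ℝ => Φ (a * ε + b * y)) (nhdsWithin 0 (Set.Ioi 0))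
        (nhds (Φ (b * y))) := by
      have hby : (0:ℝ) < b * y := mul_pos hb0 hy
      have hc2 : ContinuousWithinAt Φ (Set.Ioi 0) (b * y) := hcont _ hby
      have hcontf : Continuous fun ε : ℝ => a * ε + b * y := by continuity
      have htn : Tendsto (fun ε : ℝ => a * ε + b * y) (nhds 0) (nhds (b * y)) := by
        have h := hcontf.tendsto 0
        simpa using h
      have ht : Tendsto (fun ε : ℝ => a * ε + b * y) (nhdsWithin 0 (Set.Ioi 0))
          (nhdsWithin (b * y) (Set.Ioi 0)) := by
        apply tendsto_nhdsWithin_of_tendsto_nhds_of_eventually_within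
        · exact htn.mono_left nhdsWithin_le_nhds
        · filter_upwards [self_mem_nhdsWithin] with ε hε
          have hε' : (0:ℝ) < ε := hε
          have : 0 < a * ε := mul_pos ha0 hε'
          exact Set.mem_Ioi.2 (by linarith)
      exact hc2.tendsto.comp ht
    refine le_of_tendsto_of_tendsto h2 h1 ?_
    filter_upwards [self_mem_nhdsWithin] with ε hε
    exact hineq ε hε
  refine ⟨convex_Ici 0, ?_⟩
  intro x hx y hy a b ha hb hab
  rcases eq_or_lt_of_le (Set.mem_Ici.1 hx) with hx0 | hx0
  · rcases eq_or_lt_of_le (Set.mem_Ici.1 hy) with hy0 | hy0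
    · have : a • x + b • y = 0 := by rw [← hx0, ← hy0]; ring_nf
      rw [this, ← hx0, ← hy0]
      have : a * Φ 0 + b * Φ 0 = Φ 0 := by rw [← add_mul, hab, one_mul]
      simp only [smul_eq_mul]
      linarith
    · have := key y hy0 a b ha hb hab
      simpa [smul_eq_mul, ← hx0] using this
  · rcases eq_or_lt_of_le (Set.mem_Ici.1 hy) with hy0 | hy0
    · have := key x hx0 b a hb ha (by linarith)
      have hrw : a • x + b • y = a * x := by rw [← hy0]; simp [smul_eq_mul]
      rw [hrw]
      simp only [smul_eq_mul, ← hy0]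
      linarith
    · have := hc.2 (Set.mem_Ioi.2 hx0) (Set.mem_Ioi.2 hy0) ha hb hab
      simpa using this

/-- A convex function on `[0,∞)` is bounded below by an affine function. -/
lemma exists_affine_lower {Φ : ℝ → ℝ} (hc : ConvexOn ℝ (Set.Ici 0) Φ) :
    ∃ K : ℝ, 0 ≤ K ∧ ∀ x : ℝ, 0 ≤ x → -(K * (x + 1)) ≤ Φ x := by
  refine ⟨|Φ 1| + |Φ 1 - Φ 0| + |Φ 2 - Φ 1|, by positivity, ?_⟩
  intro x hx
  rcases lt_trichotomy x 1 with h1 | h1 | h1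
  · have hs := hc.slope_mono_adjacent (Set.mem_Ici.2 hx)
      (Set.mem_Ici.2 (by norm_num : (0:ℝ) ≤ 2)) h1 (by norm_num)
    have h1x : (0:ℝ) < 1 - x := by linarith
    rw [div_le_div_iff₀ h1x (by norm_num : (0:ℝ) < 2 - 1)] at hs
    -- hs : (Φ 1 - Φ x) * (2 - 1) ≤ (Φ 2 - Φ 1) * (1 - x)
    nlinarith [le_abs_self (Φ 2 - Φ 1), neg_abs_le (Φ 2 - Φ 1), le_abs_self (Φ 1),
      neg_abs_le (Φ 1), abs_nonneg (Φ 1 - Φ 0), abs_nonneg (Φ 2 - Φ 1), abs_nonneg (Φ 1),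
      mul_le_mul_of_nonneg_right (le_abs_self (Φ 2 - Φ 1)) h1x.le,
      mul_nonneg (abs_nonneg (Φ 2 - Φ 1)) hx]
  · subst h1
    nlinarith [neg_abs_le (Φ 1), abs_nonneg (Φ 1 - Φ 0), abs_nonneg (Φ 2 - Φ 1),
      abs_nonneg (Φ 1)]
  · have hs := hc.slope_mono_adjacent (Set.mem_Ici.2 (le_refl 0))
      (Set.mem_Ici.2 hx) (by norm_num : (0:ℝ) < 1) h1
    have hx1 : (0:ℝ) < x - 1 := by linarith
    rw [div_le_div_iff₀ (by norm_num : (0:ℝ) < 1 - 0) hx1] at hs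
    -- hs : (Φ 1 - Φ 0) * (x - 1) ≤ (Φ x - Φ 1) * (1 - 0)
    nlinarith [neg_abs_le (Φ 1), neg_abs_le (Φ 1 - Φ 0), abs_nonneg (Φ 2 - Φ 1),
      abs_nonneg (Φ 1), abs_nonneg (Φ 1 - Φ 0),
      mul_le_mul_of_nonneg_right (neg_abs_le (Φ 1 - Φ 0)) hx1.le]

/-- Continuity of the truncated extension of a convex function with limit at `0⁺`. -/
lemma continuous_phi_max {Φ : ℝ → ℝ} (hc : ConvexOn ℝ (Set.Ioi 0) Φ)
    (h0 : Tendsto Φ (nhdsWithin 0 (Set.Ioi 0)) (nhds (Φ 0))) :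
    Continuous (fun x : ℝ => Φ (max x 0)) := by
  have hcont : ContinuousOn Φ (Set.Ici 0) := by
    intro x hx
    rcases eq_or_lt_of_le (Set.mem_Ici.1 hx) with hx0 | hx0
    · have hcw : ContinuousWithinAt Φ (Set.Ici 0) 0 := by
        rw [← continuousWithinAt_diff_self,
          show Set.Ici (0:ℝ) \ {0} = Set.Ioi 0 from Set.Ici_sdiff_left]
        exact h0
      rwa [← hx0]
    · exact ((hc.continuousOn isOpen_Ioi).continuousAt (Ioi_mem_nhds hx0)).continuousWithinAt
  exact hcont.comp_continuous (continuous_id.max continuous_const)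
    (fun x => Set.mem_Ici.2 (le_max_right _ _))

lemma coeFn_finset_sum {α : Type*} [MeasurableSpace α] {μ : Measure α}
    {ι : Type*} (t : Finset ι) (g : ι → α →ₘ[μ] ℝ) :
    ⇑(∑ i ∈ t, g i) =ᵐ[μ] fun ω => ∑ i ∈ t, g i ω := by
  classical
  induction t using Finset.induction_on with
  | empty => simp only [Finset.sum_empty]; exact MeasureTheory.AEEqFun.coeFn_zero (μ := μ) (β := ℝ)
  | insert a s h ih =>
    rw [Finset.sum_insert h]
    filter_upwards [MeasureTheory.AEEqFun.coeFn_add (g a) (∑ i ∈ s, g i), ih] with ω h1 h2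
    rw [h1]
    simp only [Pi.add_apply, h2, Finset.sum_insert h]

/-- Proposition 19 of Biagini–Frittelli: if `Φ(0) < +∞` and `M_Φ ≠ ∅`, then the polar of
`C` inside `Lin(M_Φ)` (the linear span of the densities of `M_Φ` in `L¹(P)`) is exactly
the convex cone `co(M_Φ)` generated by the densities of `M_Φ`. -/
theorem polar_of_C_eq_cone_of_MPhi
    (P : Measure Ω) [IsProbabilityMeasure P]
    (C : Set (Ω → ℝ))
    (hCbdd : ∀ g ∈ C, MemLp g ⊤ P)
    (hCcone : ∀ f ∈ C, ∀ g ∈ C, ∀ a b : ℝ, 0 ≤ a → 0 ≤ b →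
      (fun ω => a * f ω + b * g ω) ∈ C)
    (hCneg : ∀ f : Ω → ℝ, MemLp f ⊤ P → (∀ᵐ ω ∂P, f ω ≤ 0) → f ∈ C)
    (Φ : ℝ → ℝ)
    (hΦconv : ConvexOn ℝ (Set.Ioi 0) Φ)
    (hΦgrowth : ∀ l₀ l₁ : ℝ, 0 < l₀ → l₀ ≤ l₁ → ∃ a : ℝ, 0 < a ∧ ∃ b : ℝ, 0 < b ∧
      ∀ y : ℝ, 0 < y → ∀ l ∈ Set.Icc l₀ l₁,
        max (Φ (l * y)) 0 ≤ a * max (Φ y) 0 + b * (y + 1))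
    (hΦ0 : Tendsto Φ (nhdsWithin 0 (Set.Ioi 0)) (nhds (Φ 0)))
    (hMPhi : (MPhi P C Φ).Nonempty) :
    {z : Ω →ₘ[P] ℝ | z ∈ Submodule.span ℝ (densAE P '' MPhi P C Φ) ∧
        ∀ g ∈ C, ∫ ω, z ω * g ω ∂P ≤ 0} =
      {z : Ω →ₘ[P] ℝ | ∃ l : ℝ, 0 ≤ l ∧ ∃ Q ∈ MPhi P C Φ, z = l • densAE P Q} := by
  classical
  ext z
  simp only [Set.mem_setOf_eq]
  constructor
  · rintro ⟨hspan, hpolar⟩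
    have hzsm : StronglyMeasurable ⇑z := z.stronglyMeasurable
    -- span representation
    obtain ⟨c, hsupp, hsum⟩ := Submodule.mem_span_set.1 hspan
    set t := c.support with ht
    have hQex : ∀ v ∈ t, ∃ Q, Q ∈ MPhi P C Φ ∧ densAE P Q = v := by
      intro v hv
      rcases hsupp hv with ⟨Q, hQ, hQv⟩
      exact ⟨Q, hQ, hQv⟩
    choose! Qm hQm hQmv using hQex
    set f : (Ω →ₘ[P] ℝ) → Ω → ℝ := fun v ω => ((Qm v).rnDeriv P ω).toReal with hfdef
    have hfnn : ∀ v ω, 0 ≤ f v ω := fun v ω => ENNReal.toReal_nonneg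
    have hfint : ∀ v ∈ t, Integrable (f v) P := by
      intro v hv
      haveI : IsProbabilityMeasure (Qm v) := (hQm v hv).1.1
      exact Measure.integrable_toReal_rnDeriv
    have hΦfint : ∀ v ∈ t, Integrable (fun ω => Φ (f v ω)) P := fun v hv => (hQm v hv).2
    have hzsum : z = ∑ v ∈ t, c v • v := by rw [← hsum]; rfl
    have hv_ae : ∀ᵐ ω ∂P, ∀ v ∈ t, (c v • v) ω = c v * f v ω := by
      rw [Filter.eventually_all_finset]
      intro v hv
      have h1 := MeasureTheory.AEEqFun.coeFn_smul (c v) v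
      have h2 : ⇑v =ᵐ[P] fun ω => ((Qm v).rnDeriv P ω).toReal := by
        conv_lhs => rw [← hQmv v hv]
        exact MeasureTheory.AEEqFun.coeFn_mk (fun ω => ((Qm v).rnDeriv P ω).toReal)
          (((Measure.measurable_rnDeriv (Qm v) P).ennreal_toReal).aestronglyMeasurable)
      filter_upwards [h1, h2] with ω e1 e2
      rw [e1]
      simp only [Pi.smul_apply, smul_eq_mul, e2, hfdef]
    have hrep : ⇑z =ᵐ[P] fun ω => ∑ v ∈ t, c v * f v ω := by
      rw [hzsum]
      filter_upwards [coeFn_finset_sum t (fun v => c v • v), hv_ae] with ω h1 h2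
      rw [h1]
      exact Finset.sum_congr rfl h2
    have hzint : Integrable ⇑z P :=
      (integrable_finset_sum t fun v hv => ((hfint v hv).const_mul (c v))).congr hrep.symm
    -- z ≥ 0 a.e.
    have hzpos : ∀ᵐ ω ∂P, 0 ≤ z ω := by
      have hgC : (fun ω => if z ω < 0 then (-1:ℝ) else 0) ∈ C := by
        apply hCneg
        · apply memLp_top_of_bound ?_ 1 ?_
          · apply Measurable.aestronglyMeasurable
            exact Measurable.ite (measurableSet_lt hzsm.measurable measurable_const)
              measurable_const measurable_const
          · filter_upwards with ω
            by_cases h : z ω < 0 <;> simp [h]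
        · filter_upwards with ω
          by_cases h : z ω < 0 <;> simp [h]
      have hle := hpolar _ hgC
      have heq : (fun ω => z ω * (if z ω < 0 then (-1:ℝ) else 0)) =
          fun ω => max (-(z ω)) 0 := by
        funext ω
        by_cases h : z ω < 0
        · simp only [h, if_true]
          rw [max_eq_left (by linarith)]
          ring
        · simp only [h, if_false, mul_zero]
          rw [max_eq_right (by simp at h; linarith)]
      rw [heq] at hle
      have hnn : 0 ≤ᵐ[P] fun ω => max (-(z ω)) 0 :=
        Filter.Eventually.of_forall fun ω => le_max_right _ _
      have hint : Integrable (fun ω => max (-(z ω)) 0) P := hzint.neg.pos_part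
      have h0' : ∫ ω, max (-(z ω)) 0 ∂P = 0 :=
        le_antisymm hle (integral_nonneg fun ω => le_max_right _ _)
      have hae := (integral_eq_zero_iff_of_nonneg_ae hnn hint).1 h0'
      filter_upwards [hae] with ω hω
      have h1 : -(z ω) ≤ max (-(z ω)) 0 := le_max_left _ _
      rw [hω] at h1
      simpa using h1
    set l : ℝ := ∫ ω, z ω ∂P with hl
    have hl0 : 0 ≤ l := integral_nonneg_of_ae hzpos
    obtain ⟨Q₀, hQ₀⟩ := hMPhi
    rcases eq_or_lt_of_le hl0 with hl0' | hlpos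
    · -- l = 0 → z = 0
      have hz0 : ⇑z =ᵐ[P] 0 := (integral_eq_zero_iff_of_nonneg_ae hzpos hzint).1 hl0'.symm
      refine ⟨0, le_rfl, Q₀, hQ₀, ?_⟩
      apply MeasureTheory.AEEqFun.ext
      rw [zero_smul]
      exact hz0.trans (MeasureTheory.AEEqFun.coeFn_zero (μ := P) (β := ℝ)).symm
    · -- l > 0
      set lam : (Ω →ₘ[P] ℝ) → ℝ := fun v => max (c v) 0 with hlamdef
      have hlamnn : ∀ v, 0 ≤ lam v := fun v => le_max_right _ _
      set s : ℝ := ∑ v ∈ t, lam v with hs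
      have hsnn : 0 ≤ s := Finset.sum_nonneg fun v _ => hlamnn v
      have hspos : 0 < s := by
        rcases eq_or_lt_of_le hsnn with h0 | h
        swap
        · exact h
        exfalso
        have hall : ∀ v ∈ t, lam v = 0 :=
          (Finset.sum_eq_zero_iff_of_nonneg fun v _ => hlamnn v).1 h0.symm
        have hzle : ∀ᵐ ω ∂P, z ω ≤ 0 := by
          filter_upwards [hrep] with ω hω
          rw [hω]
          apply Finset.sum_nonpos
          intro v hv
          have hcv : c v ≤ 0 := by
            have h1 : c v ≤ lam v := le_max_left _ _
            rw [hall v hv] at h1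
            exact h1
          exact mul_nonpos_iff.2 (Or.inr ⟨hcv, hfnn v ω⟩)
        have hz0 : ⇑z =ᵐ[P] 0 := by
          filter_upwards [hzpos, hzle] with ω h1 h2
          exact le_antisymm h2 h1
        have : l = 0 := by
          rw [hl, integral_congr_ae hz0]
          simp
        linarith
      have hIci : ConvexOn ℝ (Set.Ici 0) Φ := convexOn_Ici_of_Ioi hΦconv hΦ0
      obtain ⟨K, hK0, hKb⟩ := exists_affine_lower hIci
      have hΨ : ConvexOn ℝ (Set.Ici 0) (fun x => max (Φ x) 0) := by
        have h := hIci.sup (convexOn_const (0:ℝ) (convex_Ici 0))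
        have hfun : (Φ ⊔ fun _ => (0:ℝ)) = fun x => max (Φ x) 0 := by
          funext x
          simp [Pi.sup_apply]
        rwa [hfun] at h
      set lam0 : ℝ := s / l with hlam0
      have hlam0pos : 0 < lam0 := div_pos hspos hlpos
      obtain ⟨a, ha, b, hb, hgr⟩ := hΦgrowth lam0 lam0 hlam0pos le_rfl
      set u : Ω → ℝ := fun ω => l⁻¹ * z ω with hu
      set w : Ω → ℝ := fun ω => ∑ v ∈ t, (lam v / s) * f v ω with hw
      have hwnn : ∀ ω, 0 ≤ w ω := fun ω =>
        Finset.sum_nonneg fun v _ => mul_nonneg (div_nonneg (hlamnn v) hsnn) (hfnn v ω)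
      have hwint : Integrable w P :=
        integrable_finset_sum _ fun v hv => ((hfint v hv).const_mul _)
      have huint : Integrable u P := hzint.const_mul _
      have hunn : ∀ᵐ ω ∂P, 0 ≤ u ω := by
        filter_upwards [hzpos] with ω h
        exact mul_nonneg (inv_nonneg.2 hlpos.le) h
      set Q : Measure Ω := P.withDensity (fun ω => ENNReal.ofReal (u ω)) with hQdef
      have hQP : Q ≪ P := withDensity_absolutelyContinuous _ _
      have hDmeas : Measurable fun ω => ENNReal.ofReal (u ω) :=
        (measurable_const.mul hzsm.measurable).ennreal_ofReal
      have hrn : Q.rnDeriv P =ᵐ[P] fun ω => ENNReal.ofReal (u ω) :=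
        Measure.rnDeriv_withDensity P hDmeas
      have hρu : (fun ω => (Q.rnDeriv P ω).toReal) =ᵐ[P] u := by
        filter_upwards [hrn, hunn] with ω h1 h2
        rw [h1, ENNReal.toReal_ofReal h2]
      have hintu : ∫ ω, u ω ∂P = 1 := by
        rw [hu]
        rw [integral_const_mul]
        rw [← hl]
        exact inv_mul_cancel₀ hlpos.ne'
      have hQprob : IsProbabilityMeasure Q := by
        constructor
        rw [hQdef, withDensity_apply _ MeasurableSet.univ, Measure.restrict_univ,
          ← ofReal_integral_eq_lintegral_ofReal huint hunn, hintu]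
        simp
      have hQsep : Q ∈ sepMeasures P C := by
        refine ⟨hQprob, hQP, ?_⟩
        intro g hg
        haveI := hQprob
        rw [← integral_rnDeriv_smul hQP (f := g)]
        have hcongr : (fun ω => (Q.rnDeriv P ω).toReal • g ω) =ᵐ[P]
            fun ω => l⁻¹ * (z ω * g ω) := by
          filter_upwards [hρu] with ω h
          rw [smul_eq_mul, h, hu]
          ring
        rw [integral_congr_ae hcongr, integral_const_mul]
        exact mul_nonpos_iff.2 (Or.inl ⟨inv_nonneg.2 hlpos.le, hpolar g hg⟩)
      -- Φ integrability for Q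
      have hmeasΦ : AEStronglyMeasurable (fun ω => Φ ((Q.rnDeriv P ω).toReal)) P := by
        have hcont := continuous_phi_max hΦconv hΦ0
        have hE : (fun ω => Φ ((Q.rnDeriv P ω).toReal)) =
            fun ω => Φ (max ((Q.rnDeriv P ω).toReal) 0) := by
          funext ω
          rw [max_eq_left ENNReal.toReal_nonneg]
        rw [hE]
        exact (hcont.measurable.comp
          ((Measure.measurable_rnDeriv Q P).ennreal_toReal)).aestronglyMeasurable
      set Ψ0 : ℝ := max (Φ 0) 0 with hΨ0
      have hΨ0nn : 0 ≤ Ψ0 := le_max_right _ _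
      set B : Ω → ℝ := fun ω => Ψ0 + Ψ0 + a * (∑ v ∈ t, (lam v / s) * |Φ (f v ω)|)
        + b * (w ω + 1) + K * (u ω + 1) with hB
      have hSint : Integrable (fun ω => ∑ v ∈ t, (lam v / s) * |Φ (f v ω)|) P :=
        integrable_finset_sum _ fun v hv => ((hΦfint v hv).abs.const_mul _)
      have hBint : Integrable B P := by
        rw [hB]
        exact ((((integrable_const (Ψ0 + Ψ0)).add (hSint.const_mul a)).add
          ((hwint.add (integrable_const 1)).const_mul b)).add
          ((huint.add (integrable_const 1)).const_mul K))
      have hweights : ∑ v ∈ t, lam v / s = 1 := by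
        rw [← Finset.sum_div, ← hs, div_self hspos.ne']
      have hbound : ∀ᵐ ω ∂P, ‖Φ ((Q.rnDeriv P ω).toReal)‖ ≤ B ω := by
        filter_upwards [hρu, hrep, hzpos] with ω hρ hr hz0
        rw [Real.norm_eq_abs, hρ]
        have hu0 : 0 ≤ u ω := mul_nonneg (inv_nonneg.2 hlpos.le) hz0
        have hSnn : 0 ≤ ∑ v ∈ t, (lam v / s) * |Φ (f v ω)| :=
          Finset.sum_nonneg fun v _ =>
            mul_nonneg (div_nonneg (hlamnn v) hsnn) (abs_nonneg _)
        have hsw : s * w ω = ∑ v ∈ t, lam v * f v ω := by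
          rw [hw, Finset.mul_sum]
          refine Finset.sum_congr rfl fun v hv => ?_
          field_simp
        have huw : u ω ≤ lam0 * w ω := by
          have h1 : z ω ≤ ∑ v ∈ t, lam v * f v ω := by
            rw [hr]
            exact Finset.sum_le_sum fun v hv =>
              mul_le_mul_of_nonneg_right (le_max_left _ _) (hfnn v ω)
          have h2 : lam0 * w ω = l⁻¹ * (s * w ω) := by
            rw [hlam0]
            field_simp
          rw [h2, hsw, hu]
          exact mul_le_mul_of_nonneg_left h1 (inv_nonneg.2 hlpos.le)
        have hup : Φ (u ω) ≤ Ψ0 + Ψ0 + a * (∑ v ∈ t, (lam v / s) * |Φ (f v ω)|)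
            + b * (w ω + 1) := by
          have h1 : Φ (u ω) ≤ max (Φ 0) (Φ (lam0 * w ω)) := by
            apply hIci.le_on_segment (Set.mem_Ici.2 le_rfl)
              (Set.mem_Ici.2 (mul_nonneg hlam0pos.le (hwnn ω)))
            rw [segment_eq_Icc (mul_nonneg hlam0pos.le (hwnn ω))]
            exact ⟨hu0, huw⟩
          rcases eq_or_lt_of_le (hwnn ω) with hw0 | hwpos
          · -- w ω = 0
            have hlw : lam0 * w ω = 0 := by rw [← hw0, mul_zero]
            rw [hlw] at h1
            have h2 : Φ (u ω) ≤ max (Φ 0) 0 := by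
              rcases max_choice (Φ 0) (Φ 0) with h | h <;>
                calc Φ (u ω) ≤ max (Φ 0) (Φ 0) := h1
                  _ ≤ max (Φ 0) 0 := by rw [max_self]; exact le_max_left _ _
            have hb1 : 0 ≤ b * (w ω + 1) := by
              apply mul_nonneg hb.le
              linarith [hwnn ω]
            have ha1 : 0 ≤ a * (∑ v ∈ t, (lam v / s) * |Φ (f v ω)|) :=
              mul_nonneg ha.le hSnn
            rw [← hΨ0] at h2
            linarith
          · -- 0 < w ω
            have h3 : max (Φ (lam0 * w ω)) 0 ≤ a * max (Φ (w ω)) 0 + b * (w ω + 1) :=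
              hgr (w ω) hwpos lam0 ⟨le_rfl, le_rfl⟩
            have h4 : max (Φ (w ω)) 0 ≤ ∑ v ∈ t, (lam v / s) * max (Φ (f v ω)) 0 := by
              have hmap := hΨ.map_sum_le (t := t) (w := fun v => lam v / s)
                (p := fun v => f v ω)
                (fun v _ => div_nonneg (hlamnn v) hsnn) hweights
                (fun v _ => Set.mem_Ici.2 (hfnn v ω))
              simpa [smul_eq_mul, hw] using hmap
            have h5 : ∑ v ∈ t, (lam v / s) * max (Φ (f v ω)) 0
                ≤ ∑ v ∈ t, (lam v / s) * |Φ (f v ω)| := by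
              refine Finset.sum_le_sum fun v hv => ?_
              apply mul_le_mul_of_nonneg_left _ (div_nonneg (hlamnn v) hsnn)
              exact max_le (le_abs_self _) (abs_nonneg _)
            have h6 : Φ (lam0 * w ω) ≤ max (Φ (lam0 * w ω)) 0 := le_max_left _ _
            have h7 : Φ 0 ≤ Ψ0 := le_max_left _ _
            have h8 : max (Φ (w ω)) 0 ≤ ∑ v ∈ t, (lam v / s) * |Φ (f v ω)| :=
              h4.trans h5
            have h9 : a * max (Φ (w ω)) 0 ≤ a * ∑ v ∈ t, (lam v / s) * |Φ (f v ω)| :=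
              mul_le_mul_of_nonneg_left h8 ha.le
            have hb1 : 0 ≤ b * (w ω + 1) := mul_nonneg hb.le (by linarith [hwnn ω])
            have hcomb : max (Φ 0) (Φ (lam0 * w ω)) ≤
                Ψ0 + Ψ0 + a * (∑ v ∈ t, (lam v / s) * |Φ (f v ω)|) + b * (w ω + 1) := by
              apply max_le
              · have ha1 : 0 ≤ a * (∑ v ∈ t, (lam v / s) * |Φ (f v ω)|) :=
                  mul_nonneg ha.le hSnn
                linarith
              · linarith [h6, h3, h9]
            exact h1.trans hcomb
        have hlow : -(K * (u ω + 1)) ≤ Φ (u ω) := hKb (u ω) hu0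
        rw [hB]
        rw [abs_le]
        constructor
        · have hb1 : 0 ≤ b * (w ω + 1) := by
            apply mul_nonneg hb.le
            linarith [hwnn ω]
          have ha1 : 0 ≤ a * (∑ v ∈ t, (lam v / s) * |Φ (f v ω)|) :=
            mul_nonneg ha.le
              (Finset.sum_nonneg fun v _ =>
                mul_nonneg (div_nonneg (hlamnn v) hsnn) (abs_nonneg _))
          linarith
        · have hK1 : 0 ≤ K * (u ω + 1) := mul_nonneg hK0 (by linarith)
          linarith
      have hQMPhi : Q ∈ MPhi P C Φ := ⟨hQsep, Integrable.mono' hBint hmeasΦ hbound⟩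
      refine ⟨l, hl0, Q, hQMPhi, ?_⟩
      apply MeasureTheory.AEEqFun.ext
      have hd : ⇑(densAE P Q) =ᵐ[P] fun ω => (Q.rnDeriv P ω).toReal :=
        MeasureTheory.AEEqFun.coeFn_mk _ _
      have h1 : ⇑(l • densAE P Q) =ᵐ[P] fun ω => l * (Q.rnDeriv P ω).toReal := by
        filter_upwards [MeasureTheory.AEEqFun.coeFn_smul l (densAE P Q), hd] with ω e1 e2
        rw [e1]
        simp [e2]
      filter_upwards [h1, hρu] with ω e1 e2
      rw [e1, e2, hu]
      field_simp
  · rintro ⟨l, hl, Q, hQ, rfl⟩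
    haveI : IsProbabilityMeasure Q := hQ.1.1
    have hQP : Q ≪ P := hQ.1.2.1
    constructor
    · exact Submodule.smul_mem _ _ (Submodule.subset_span ⟨Q, hQ, rfl⟩)
    · intro g hg
      have hd : ⇑(densAE P Q) =ᵐ[P] fun ω => (Q.rnDeriv P ω).toReal :=
        MeasureTheory.AEEqFun.coeFn_mk _ _
      have h1 : (fun ω => (l • densAE P Q) ω * g ω) =ᵐ[P]
          fun ω => l * ((Q.rnDeriv P ω).toReal • g ω) := by
        filter_upwards [MeasureTheory.AEEqFun.coeFn_smul l (densAE P Q), hd] with ω e1 e2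
        rw [e1]
        simp only [Pi.smul_apply, smul_eq_mul, e2]
        ring
      rw [integral_congr_ae h1, integral_const_mul,
        integral_rnDeriv_smul hQP (f := g)]
      exact mul_nonpos_iff.2 (Or.inl ⟨hl, hQ.1.2.2 g hg⟩)
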